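/- Let G be a finite connected graph and let v be a boundary vertex of G that is not a simplicial vertex. Then there exist vertices a, b ∈ ∂(G) \ {v} such that v is not mutually maximally distant with a and v is not mutually maximally distant with b. -/

import Mathlib

open SimpleGraph

variable {V : Type*}

/-- `u` is maximally distant from `v` in `G`: every neighbor `w` of `u`
satisfies `d(v,w) ≤ d(v,u)`. -/
def MaxDistant (G : SimpleGraph V) (u v : V) : Prop :=
  ∀ w, G.Adj u w → G.dist v w ≤ G.dist v u

/-- `u` and `v` are mutually maximally distant in `G`. -/
def MMD (G : SimpleGraph V) (u v : V) : Prop :=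
  MaxDistant G u v ∧ MaxDistant G v u

/-- The boundary of `G`: vertices maximally distant from some vertex. -/
def boundary (G : SimpleGraph V) : Set V := {u | ∃ v, MaxDistant G u v}

/-- The strong resolving graph on the whole vertex set (`G_{SR+I}`):
two vertices are adjacent iff they are distinct and mutually maximally distant. -/
def srGraphI (G : SimpleGraph V) : SimpleGraph V where
  Adj u v := u ≠ v ∧ MMD G u v
  symm := ⟨by
    rintro u v ⟨hne, h1, h2⟩
    exact ⟨hne.symm, h2, h1⟩⟩
  loopless := ⟨by
    rintro u ⟨hne, _⟩
    exact hne rfl⟩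

/-- The strong resolving graph `G_SR`, with vertex set the boundary of `G`. -/
def srGraph (G : SimpleGraph V) : SimpleGraph (boundary G) :=
  (srGraphI G).induce (boundary G)

/-- `u` and `v` are true twins: distinct vertices with equal closed neighborhoods. -/
def TrueTwins (G : SimpleGraph V) (u v : V) : Prop :=
  u ≠ v ∧ insert u (G.neighborSet u) = insert v (G.neighborSet v)

/-- `u` and `v` are false twins: distinct vertices with equal open neighborhoods. -/
def FalseTwins (G : SimpleGraph V) (u v : V) : Prop :=
  u ≠ v ∧ G.neighborSet u = G.neighborSet v

/-- A vertex is simplicial if its neighborhood induces a complete graph. -/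
def IsSimplicial (G : SimpleGraph V) (v : V) : Prop :=
  ∀ a b, G.Adj v a → G.Adj v b → a ≠ b → G.Adj a b

/-- `w` strongly resolves `u` and `v`. -/
def StronglyResolves (G : SimpleGraph V) (w u v : V) : Prop :=
  G.dist w u = G.dist w v + G.dist v u ∨ G.dist w v = G.dist w u + G.dist u v

/-- `S` is a strong metric generator for `G`. -/
def IsStrongMetricGenerator (G : SimpleGraph V) (S : Set V) : Prop :=
  ∀ u v : V, u ≠ v → ∃ w ∈ S, StronglyResolves G w u v

/-- The strong metric dimension of `G`. -/
noncomputable def sdim (G : SimpleGraph V) : ℕ :=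
  sInf {n | ∃ S : Set V, S.ncard = n ∧ IsStrongMetricGenerator G S}

/-- `S` is a vertex cover of `H`. -/
def IsVertexCover (H : SimpleGraph V) (S : Set V) : Prop :=
  ∀ u v : V, H.Adj u v → u ∈ S ∨ v ∈ S

/-- The vertex cover number of `H`. -/
noncomputable def vertexCoverNumber (H : SimpleGraph V) : ℕ :=
  sInf {n | ∃ S : Set V, S.ncard = n ∧ _root_.IsVertexCover H S}

/-- The graph `G*`: distinct vertices adjacent iff at distance at least two
or true twins. -/
def GStar (G : SimpleGraph V) : SimpleGraph V where
  Adj u v := u ≠ v ∧ (2 ≤ G.dist u v ∨ TrueTwins G u v)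
  symm := ⟨by
    rintro u v ⟨hne, h | h⟩
    · exact ⟨hne.symm, Or.inl (by rwa [G.dist_comm])⟩
    · exact ⟨hne.symm, Or.inr ⟨h.1.symm, h.2.symm⟩⟩⟩
  loopless := ⟨by
    rintro u ⟨hne, _⟩
    exact hne rfl⟩

/-- The direct (tensor) product of two graphs. -/
def DirectProd {α β : Type*} (G : SimpleGraph α) (H : SimpleGraph β) :
    SimpleGraph (α × β) where
  Adj x y := G.Adj x.1 y.1 ∧ H.Adj x.2 y.2
  symm := ⟨fun _ _ h => ⟨h.1.symm, h.2.symm⟩⟩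
  loopless := ⟨fun x h => G.loopless.irrefl x.1 h.1⟩

/-- The strong product of two graphs. -/
def StrongProd {α β : Type*} (G : SimpleGraph α) (H : SimpleGraph β) :
    SimpleGraph (α × β) where
  Adj x y := x ≠ y ∧ (x.1 = y.1 ∨ G.Adj x.1 y.1) ∧ (x.2 = y.2 ∨ H.Adj x.2 y.2)
  symm := ⟨by
    rintro x y ⟨hne, h1, h2⟩
    exact ⟨hne.symm, h1.imp Eq.symm Adj.symm, h2.imp Eq.symm Adj.symm⟩⟩
  loopless := ⟨by
    rintro x ⟨hne, _⟩
    exact hne rfl⟩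

/-- The Cartesian sum (disjunctive product) of two graphs. -/
def CartSum {α β : Type*} (G : SimpleGraph α) (H : SimpleGraph β) :
    SimpleGraph (α × β) where
  Adj x y := G.Adj x.1 y.1 ∨ H.Adj x.2 y.2
  symm := ⟨fun _ _ h => h.imp Adj.symm Adj.symm⟩
  loopless := ⟨fun x h => h.elim (G.loopless.irrefl x.1) (H.loopless.irrefl x.2)⟩

/-- The lexicographic product of two graphs. -/
def LexProd {α β : Type*} (G : SimpleGraph α) (H : SimpleGraph β) :
    SimpleGraph (α × β) where
  Adj x y := G.Adj x.1 y.1 ∨ (x.1 = y.1 ∧ H.Adj x.2 y.2)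
  symm := ⟨fun _ _ h => h.imp Adj.symm (fun h => ⟨h.1.symm, h.2.symm⟩)⟩
  loopless := ⟨fun x h => h.elim (G.loopless.irrefl x.1) (fun h => H.loopless.irrefl x.2 h.2)⟩

/-- The disjoint union of `n` copies of the complete graph on `m` vertices. -/
def CopiesComplete (n m : ℕ) : SimpleGraph (Fin n × Fin m) where
  Adj x y := x.1 = y.1 ∧ x.2 ≠ y.2
  symm := ⟨fun _ _ h => ⟨h.1.symm, h.2.symm⟩⟩
  loopless := ⟨fun x h => h.2 rfl⟩

/-- Every pair of vertices lies on a common cycle of length five. -/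
def C5Connected (G : SimpleGraph V) : Prop :=
  ∀ u v : V, ∃ (w : V) (c : G.Walk w w), c.IsCycle ∧ c.length = 5 ∧
    u ∈ c.support ∧ v ∈ c.support

/-- Climbing lemma: from a start vertex satisfying an invariant preserved under
moving to a neighbor strictly farther from `t`, we reach a vertex maximally
distant from `t` still satisfying the invariant. -/
lemma climb [Fintype V] (G : SimpleGraph V) (hG : G.Connected) (t : V)
    (P : V → Prop)
    (hstep : ∀ u u', P u → G.Adj u u' → G.dist t u' = G.dist t u + 1 → P u')
    (s : V) (hs : P s) :
    ∃ a, P a ∧ MaxDistant G a t ∧ G.dist t s ≤ G.dist t a := by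
  classical
  have hne : (Finset.univ.filter fun u => P u ∧ G.dist t s ≤ G.dist t u).Nonempty :=
    ⟨s, by simp [hs]⟩
  obtain ⟨a, ha, hmax⟩ := Finset.exists_max_image _ (fun u => G.dist t u) hne
  simp only [Finset.mem_filter, Finset.mem_univ, true_and] at ha hmax
  refine ⟨a, ha.1, ?_, ha.2⟩
  intro w hw
  by_contra hlt
  push_neg at hlt
  have e1 : G.dist a w = 1 := dist_eq_one_iff_adj.mpr hw
  have t1 : G.dist t w ≤ G.dist t a + G.dist a w := hG.dist_triangle
  have heq : G.dist t w = G.dist t a + 1 := by omega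
  have hPw : P w := hstep a w ha.1 hw heq
  have := hmax w ⟨hPw, by omega⟩
  omega

theorem stmt2 [Fintype V] (G : SimpleGraph V) (hG : G.Connected)
    (v : V) (hv : v ∈ boundary G) (hns : ¬ IsSimplicial G v) :
    ∃ a ∈ boundary G, ∃ b ∈ boundary G, a ≠ v ∧ b ≠ v ∧ a ≠ b ∧
      ¬ MMD G v a ∧ ¬ MMD G v b := by
  classical
  simp only [IsSimplicial, not_forall] at hns
  obtain ⟨x, y, hvx, hvy, hxy, hnadj⟩ := hns
  have hdvx : G.dist v x = 1 := dist_eq_one_iff_adj.mpr hvx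
  have hdvy : G.dist v y = 1 := dist_eq_one_iff_adj.mpr hvy
  have hxv : G.dist x v = 1 := by rwa [G.dist_comm]
  have hyv : G.dist y v = 1 := by rwa [G.dist_comm]
  have hdxy : G.dist x y = 2 := by
    have t1 : G.dist x y ≤ G.dist x v + G.dist v y := hG.dist_triangle
    have h0 : 0 < G.dist x y := hG.pos_dist_of_ne hxy
    have h1 : G.dist x y ≠ 1 := fun h => hnadj (dist_eq_one_iff_adj.mp h)
    omega
  have hdyx : G.dist y x = 2 := by rwa [G.dist_comm]
  -- invariant for a : climbing away from y, starting from x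
  have stepA : ∀ u u', (G.dist x u < G.dist v u ∧ G.dist v u < G.dist y u) →
      G.Adj u u' → G.dist y u' = G.dist y u + 1 →
      G.dist x u' < G.dist v u' ∧ G.dist v u' < G.dist y u' := by
    rintro u u' ⟨h1, h2⟩ hadj heq
    have e1 : G.dist u u' = 1 := dist_eq_one_iff_adj.mpr hadj
    have t1 : G.dist v u' ≤ G.dist v u + G.dist u u' := hG.dist_triangle
    have t2 : G.dist y u' ≤ G.dist y v + G.dist v u' := hG.dist_triangle
    have t3 : G.dist x u' ≤ G.dist x u + G.dist u u' := hG.dist_triangle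
    omega
  have stepB : ∀ u u', (G.dist y u < G.dist v u ∧ G.dist v u < G.dist x u) →
      G.Adj u u' → G.dist x u' = G.dist x u + 1 →
      G.dist y u' < G.dist v u' ∧ G.dist v u' < G.dist x u' := by
    rintro u u' ⟨h1, h2⟩ hadj heq
    have e1 : G.dist u u' = 1 := dist_eq_one_iff_adj.mpr hadj
    have t1 : G.dist v u' ≤ G.dist v u + G.dist u u' := hG.dist_triangle
    have t2 : G.dist x u' ≤ G.dist x v + G.dist v u' := hG.dist_triangle
    have t3 : G.dist y u' ≤ G.dist y u + G.dist u u' := hG.dist_triangle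
    omega
  obtain ⟨a, ⟨ha1, ha2⟩, hamd, -⟩ := climb G hG y _ stepA x
    (by rw [G.dist_self]; constructor <;> omega)
  obtain ⟨b, ⟨hb1, hb2⟩, hbmd, -⟩ := climb G hG x _ stepB y
    (by rw [G.dist_self]; constructor <;> omega)
  refine ⟨a, ⟨y, hamd⟩, b, ⟨x, hbmd⟩, ?_, ?_, ?_, ?_, ?_⟩
  · rintro rfl
    rw [G.dist_self] at ha1
    omega
  · rintro rfl
    rw [G.dist_self] at hb1
    omega
  · rintro rfl
    omega
  · rintro ⟨h1, -⟩
    have := h1 y hvy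
    have e1 : G.dist a y = G.dist y a := dist_comm
    have e2 : G.dist a v = G.dist v a := dist_comm
    omega
  · rintro ⟨h1, -⟩
    have := h1 x hvx
    have e1 : G.dist b x = G.dist x b := dist_comm
    have e2 : G.dist b v = G.dist v b := dist_comm
    omega
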